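/- Let (g_n)_{n∈ℕ} be a bounded sequence in a Hilbert space H such that ∑_{1 ≤ m < n < ∞} |⟨g_n, g_m⟩|² < ∞. Then (g_n)_{n∈ℕ} is a 2-sequence in H; more precisely, with d = sup_n ‖g_n‖ and c = ∑_{m<n} |⟨g_n,g_m⟩|², for every n ∈ ℕ, every a ∈ ℂ^n, and every choice of pairwise distinct positive integers m_1,…,m_n, one has ‖∑_{j=1}^n a_j g_{m_j}‖² ≤ (d² + √(2c)) ‖a‖₂². -/

import Mathlib

/-- Lemma 2.6: if `(g_n)` is a bounded sequence in a Hilbert space with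
`c = ∑_{m < n} |⟨g_n, g_m⟩|² < ∞`, then `(g_n)` is a `2`-sequence; more precisely, with
`d = sup ‖g_n‖`, for all coefficients `a` and pairwise distinct indices `m_j` one has
`‖∑ a_j • g_{m_j}‖² ≤ (d² + √(2c)) ‖a‖₂²`. -/
theorem two_sequence_of_square_summable_inner
    {H : Type*} [NormedAddCommGroup H] [InnerProductSpace ℂ H] [CompleteSpace H]
    (g : ℕ → H) (d : ℝ) (hd : ∀ n, ‖g n‖ ≤ d) (c : ℝ)
    (hc : HasSum (fun q : {q : ℕ × ℕ // q.2 < q.1} =>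
      ‖(inner ℂ (g q.1.1) (g q.1.2) : ℂ)‖ ^ 2) c) :
    ∀ (n : ℕ) (a : Fin n → ℂ) (m : Fin n → ℕ), Function.Injective m →
      ‖∑ j, a j • g (m j)‖ ^ 2 ≤ (d ^ 2 + Real.sqrt (2 * c)) * ∑ j, ‖a j‖ ^ 2 := by
  classical
  intro n a m hm
  have hd0 : 0 ≤ d := le_trans (norm_nonneg _) (hd 0)
  have hc0 : 0 ≤ c := hc.nonneg fun q => by positivity
  set x : Fin n → H := fun j => g (m j) with hxdef
  set S : H := ∑ j, a j • x j with hSdef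
  set f : Fin n × Fin n → ℝ :=
    fun p => ‖a p.1‖ * ‖a p.2‖ * ‖(inner ℂ (x p.1) (x p.2) : ℂ)‖ with hfdef
  -- Step 1: expand and bound by double sum of norms
  have h1 : ‖S‖ ^ 2 ≤ ∑ p ∈ Finset.univ ×ˢ Finset.univ, f p := by
    have e1 : (inner ℂ S S : ℂ)
        = ∑ j, ∑ k, (starRingEnd ℂ) (a j) * (a k * (inner ℂ (x j) (x k) : ℂ)) := by
      simp only [hSdef, sum_inner, inner_sum, inner_smul_left, inner_smul_right,
        Finset.mul_sum]
      rw [Finset.sum_comm]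
      exact Finset.sum_congr rfl fun j _ => Finset.sum_congr rfl fun k _ => by ring
    have e2 : ‖S‖ ^ 2 = ‖(inner ℂ S S : ℂ)‖ := by
      rw [@inner_self_eq_norm_sq_to_K ℂ]
      simp
    rw [e2, e1, Finset.sum_product]
    calc ‖∑ j, ∑ k, (starRingEnd ℂ) (a j) * (a k * (inner ℂ (x j) (x k) : ℂ))‖
        ≤ ∑ j, ‖∑ k, (starRingEnd ℂ) (a j) * (a k * (inner ℂ (x j) (x k) : ℂ))‖ :=
          norm_sum_le _ _
      _ ≤ ∑ j, ∑ k, ‖(starRingEnd ℂ) (a j) * (a k * (inner ℂ (x j) (x k) : ℂ))‖ :=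
          Finset.sum_le_sum fun j _ => norm_sum_le _ _
      _ = ∑ j, ∑ k, f (j, k) := by
          simp [hfdef, norm_mul, mul_assoc]
  -- split into diagonal and off-diagonal
  set OD := (Finset.univ : Finset (Fin n)).offDiag with hODdef
  have hsplit : ∑ p ∈ Finset.univ ×ˢ Finset.univ, f p
      = ∑ p ∈ (Finset.univ : Finset (Fin n)).diag, f p + ∑ p ∈ OD, f p := by
    rw [← Finset.sum_union (Finset.disjoint_diag_offDiag _), Finset.diag_union_offDiag]
  -- diagonal bound
  have hdiag : ∑ p ∈ (Finset.univ : Finset (Fin n)).diag, f p ≤ d ^ 2 * ∑ j, ‖a j‖ ^ 2 := by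
    rw [Finset.sum_diag, Finset.mul_sum]
    apply Finset.sum_le_sum
    intro j _
    have h := norm_inner_le_norm (𝕜 := ℂ) (x j) (x j)
    have hx : ‖x j‖ ≤ d := hd (m j)
    calc ‖a j‖ * ‖a j‖ * ‖(inner ℂ (x j) (x j) : ℂ)‖
        ≤ ‖a j‖ * ‖a j‖ * (d * d) := by
          apply mul_le_mul_of_nonneg_left
            (h.trans (mul_le_mul hx hx (norm_nonneg _) hd0)) (by positivity)
      _ = d ^ 2 * ‖a j‖ ^ 2 := by ring
  -- off-diagonal: Cauchy-Schwarz
  have hA : ∑ p ∈ OD, (‖a p.1‖ * ‖a p.2‖) ^ 2 ≤ (∑ j, ‖a j‖ ^ 2) ^ 2 := by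
    have hsub : OD ⊆ Finset.univ ×ˢ Finset.univ :=
      fun p _ => Finset.mem_product.mpr ⟨Finset.mem_univ _, Finset.mem_univ _⟩
    calc ∑ p ∈ OD, (‖a p.1‖ * ‖a p.2‖) ^ 2
        ≤ ∑ p ∈ Finset.univ ×ˢ Finset.univ, (‖a p.1‖ * ‖a p.2‖) ^ 2 :=
          Finset.sum_le_sum_of_subset_of_nonneg hsub (fun p _ _ => by positivity)
      _ = (∑ j, ‖a j‖ ^ 2) ^ 2 := by
          rw [Finset.sum_product, sq (∑ j, ‖a j‖ ^ 2), Finset.sum_mul_sum]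
          simp [mul_pow]
  -- the inner-product squares over off-diagonal are at most 2c
  have hB : ∑ p ∈ OD, ‖(inner ℂ (x p.1) (x p.2) : ℂ)‖ ^ 2 ≤ 2 * c := by
    set G : Fin n × Fin n → ℝ := fun p => ‖(inner ℂ (x p.1) (x p.2) : ℂ)‖ ^ 2 with hGdef
    set s₁ := OD.filter (fun p => m p.2 < m p.1) with hs₁
    set s₂ := OD.filter (fun p => ¬ m p.2 < m p.1) with hs₂
    have hmemOD : ∀ p : Fin n × Fin n, p ∈ OD ↔ p.1 ≠ p.2 := by
      intro p
      simp [hODdef, Finset.mem_offDiag]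
    have hswapmem : ∀ p ∈ s₂, p.swap ∈ s₁ := by
      intro p hp
      rw [hs₂, Finset.mem_filter] at hp
      obtain ⟨hpOD, hlt⟩ := hp
      have hne : p.1 ≠ p.2 := (hmemOD p).mp hpOD
      have hmne : m p.1 ≠ m p.2 := fun h => hne (hm h)
      have : m p.1 < m p.2 := lt_of_le_of_ne (not_lt.mp hlt) hmne
      rw [hs₁, Finset.mem_filter]
      exact ⟨(hmemOD p.swap).mpr (Ne.symm hne), this⟩
    have hswapmem' : ∀ p ∈ s₁, p.swap ∈ s₂ := by
      intro p hp
      rw [hs₁, Finset.mem_filter] at hp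
      obtain ⟨hpOD, hlt⟩ := hp
      have hne : p.1 ≠ p.2 := (hmemOD p).mp hpOD
      rw [hs₂, Finset.mem_filter]
      exact ⟨(hmemOD p.swap).mpr (Ne.symm hne), not_lt.mpr hlt.le⟩
    have hswap : ∑ p ∈ s₂, G p = ∑ p ∈ s₁, G p := by
      apply Finset.sum_nbij' (fun p => p.swap) (fun p => p.swap) hswapmem hswapmem'
        (fun p _ => Prod.swap_swap p) (fun p _ => Prod.swap_swap p)
      intro p _
      simp only [hGdef, Prod.fst_swap, Prod.snd_swap]
      rw [norm_inner_symm]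
    have hkey : ∑ p ∈ s₁, G p ≤ c := by
      have hmem : ∀ p ∈ s₁, m p.2 < m p.1 := fun p hp => (Finset.mem_filter.mp hp).2
      rw [← Finset.sum_attach s₁ G]
      set e : {p // p ∈ s₁} → {q : ℕ × ℕ // q.2 < q.1} :=
        fun p => ⟨(m p.1.1, m p.1.2), hmem p.1 p.2⟩ with he
      have hinj : ∀ p ∈ s₁.attach, ∀ q ∈ s₁.attach, e p = e q → p = q := by
        intro p _ q _ hpq
        have h1 : m p.1.1 = m q.1.1 := congrArg (fun z => z.1.1) hpq
        have h2 : m p.1.2 = m q.1.2 := congrArg (fun z => z.1.2) hpq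
        exact Subtype.ext (Prod.ext (hm h1) (hm h2))
      have hsum := sum_le_hasSum (s₁.attach.image e)
        (fun q _ => by positivity) hc
      rw [Finset.sum_image hinj] at hsum
      exact le_of_eq_of_le (by simp [he, hGdef, hxdef]) hsum
    have hODsum : ∑ p ∈ OD, G p = ∑ p ∈ s₁, G p + ∑ p ∈ s₂, G p :=
      (Finset.sum_filter_add_sum_filter_not OD _ G).symm
    calc ∑ p ∈ OD, G p = 2 * ∑ p ∈ s₁, G p := by rw [hODsum, hswap]; ring
      _ ≤ 2 * c := by linarith
  have hoff : ∑ p ∈ OD, f p ≤ Real.sqrt (2 * c) * ∑ j, ‖a j‖ ^ 2 := by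
    have hCS := Finset.sum_mul_sq_le_sq_mul_sq OD (fun p => ‖a p.1‖ * ‖a p.2‖)
      (fun p => ‖(inner ℂ (x p.1) (x p.2) : ℂ)‖)
    have h0 : 0 ≤ ∑ p ∈ OD, f p :=
      Finset.sum_nonneg fun p _ => by positivity
    have hstep : ∑ p ∈ OD, f p ≤
        Real.sqrt (∑ p ∈ OD, (‖a p.1‖ * ‖a p.2‖) ^ 2) *
        Real.sqrt (∑ p ∈ OD, ‖(inner ℂ (x p.1) (x p.2) : ℂ)‖ ^ 2) := by
      rw [← Real.sqrt_mul (Finset.sum_nonneg fun p _ => by positivity)]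
      calc ∑ p ∈ OD, f p = Real.sqrt ((∑ p ∈ OD, f p) ^ 2) := (Real.sqrt_sq h0).symm
        _ ≤ _ := Real.sqrt_le_sqrt hCS
    calc ∑ p ∈ OD, f p
        ≤ Real.sqrt (∑ p ∈ OD, (‖a p.1‖ * ‖a p.2‖) ^ 2) *
          Real.sqrt (∑ p ∈ OD, ‖(inner ℂ (x p.1) (x p.2) : ℂ)‖ ^ 2) := hstep
      _ ≤ Real.sqrt ((∑ j, ‖a j‖ ^ 2) ^ 2) * Real.sqrt (2 * c) := by
          apply mul_le_mul (Real.sqrt_le_sqrt hA) (Real.sqrt_le_sqrt hB)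
            (Real.sqrt_nonneg _) (Real.sqrt_nonneg _)
      _ = Real.sqrt (2 * c) * ∑ j, ‖a j‖ ^ 2 := by
          rw [Real.sqrt_sq (Finset.sum_nonneg fun j _ => by positivity)]
          ring
  calc ‖S‖ ^ 2 ≤ ∑ p ∈ Finset.univ ×ˢ Finset.univ, f p := h1
    _ = ∑ p ∈ (Finset.univ : Finset (Fin n)).diag, f p + ∑ p ∈ OD, f p := hsplit
    _ ≤ d ^ 2 * ∑ j, ‖a j‖ ^ 2 + Real.sqrt (2 * c) * ∑ j, ‖a j‖ ^ 2 :=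
        add_le_add hdiag hoff
    _ = (d ^ 2 + Real.sqrt (2 * c)) * ∑ j, ‖a j‖ ^ 2 := by ring
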